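/- The caching vector defined by U i = V * W i / (∑ j, W j) is feasible (each U i > 0 and ∑ i, U i = V), and for it W i / U i = (∑ j, W j) / V for every index i; consequently its maximal per-file call ratio equals (∑ j, W j) / V and it minimizes F₂ over all feasible caching vectors. -/
import Mathlib


/-- Theorem 2 (attainment part): the caching vector `U i = V * W i / ∑ j, W j`
is feasible, has `W i / U i = (∑ j, W j) / V` for every `i`, hence its maximal
per-file call ratio equals `(∑ j, W j) / V`, and it minimizes `F₂` over all
feasible caching vectors. -/
theorem caching_F2_attained (H : ℕ) (hH : 0 < H)
    (W : Fin H → ℝ) (hW : ∀ i, 0 < W i)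
    (V : ℝ) (hV : 0 < V) :
    let U : Fin H → ℝ := fun i => V * W i / ∑ j, W j
    (∀ i, 0 < U i) ∧ (∑ i, U i = V) ∧
    (∀ i, W i / U i = (∑ j, W j) / V) ∧
    ((⨆ i, W i / U i) = (∑ j, W j) / V) ∧
    (∀ U' : Fin H → ℝ, (∀ i, 0 < U' i) → (∑ i, U' i = V) →
      (⨆ i, W i / U i) ≤ ⨆ i, W i / U' i) := by
  intro U
  haveI : Nonempty (Fin H) := ⟨⟨0, hH⟩⟩
  have hS : 0 < ∑ j, W j := Finset.sum_pos (fun i _ => hW i) Finset.univ_nonempty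
  have hUpos : ∀ i, 0 < U i := fun i =>
    div_pos (mul_pos hV (hW i)) hS
  have hsum : ∑ i, U i = V := by
    simp only [U]
    rw [← Finset.sum_div, ← Finset.mul_sum]
    field_simp
  have hratio : ∀ i, W i / U i = (∑ j, W j) / V := by
    intro i
    simp only [U]
    rw [div_div_eq_mul_div, div_eq_div_iff (mul_pos hV (hW i)).ne' hV.ne']
    ring
  have hsup : (⨆ i, W i / U i) = (∑ j, W j) / V := by
    simp only [hratio]
    exact ciSup_const
  refine ⟨hUpos, hsum, hratio, hsup, ?_⟩
  intro U' hU' hsum'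
  rw [hsup]
  -- there exists i with (∑ j, W j)/V ≤ W i / U' i
  by_contra hcon
  push_neg at hcon
  have hex : ∀ i, W i / U' i < (∑ j, W j) / V := by
    intro i
    refine lt_of_le_of_lt ?_ hcon
    exact le_ciSup (Set.Finite.bddAbove (Set.finite_range (fun i => W i / U' i))) i
  have hlt : ∀ i, W i < (∑ j, W j) / V * U' i := by
    intro i
    have := (div_lt_iff₀ (hU' i)).mp (hex i)
    linarith
  have : (∑ j, W j) < ∑ i, (∑ j, W j) / V * U' i :=
    Finset.sum_lt_sum_of_nonempty Finset.univ_nonempty (fun i _ => hlt i)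
  rw [← Finset.mul_sum, hsum', div_mul_cancel₀ _ hV.ne'] at this
  exact lt_irrefl _ this
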